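/- Let ν > 0 and 0 ≤ b < a. With I_3(t) := F_ν(b,t) (F_ν(a,t) − F_ν(b,t)) / (1 − F_ν(b,t)), one has lim_{t→∞} t^{2ν} I_3(t) = (b^{2ν} / (2^ν Γ(ν+1))) · C_ν. -/

import Mathlib

open MeasureTheory Filter

/-- `F ν x t = (x^{2ν}/(2^ν Γ(ν))) ∫_t^∞ s^{-(ν+1)} exp(-x²/(2s)) ds`. -/
noncomputable def F (ν x t : ℝ) : ℝ :=
  (x ^ (2 * ν) / (2 ^ ν * Real.Gamma ν)) *
    ∫ s in Set.Ioi t, s ^ (-(ν + 1)) * Real.exp (-x ^ 2 / (2 * s))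

lemma aux_intOn (ν x t : ℝ) (hν : 0 < ν) (ht : 0 < t) :
    IntegrableOn (fun s : ℝ => s ^ (-(ν + 1)) * Real.exp (-x ^ 2 / (2 * s))) (Set.Ioi t) := by
  have hbase : IntegrableOn (fun s : ℝ => s ^ (-(ν + 1))) (Set.Ioi t) :=
    integrableOn_Ioi_rpow_of_lt (by linarith) ht
  refine hbase.mono' ?_ ?_
  · apply ContinuousOn.aestronglyMeasurable _ measurableSet_Ioi
    intro s hs
    have hs0 : s ≠ 0 := ne_of_gt (ht.trans hs)
    apply ContinuousAt.continuousWithinAt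
    exact (Real.continuousAt_rpow_const s _ (Or.inl hs0)).mul
      (Real.continuous_exp.continuousAt.comp
        (ContinuousAt.div continuousAt_const (by fun_prop) (by simpa using hs0)))
  · filter_upwards [ae_restrict_mem measurableSet_Ioi] with s hs
    have hs0 : 0 < s := ht.trans hs
    have h1 : Real.exp (-x ^ 2 / (2 * s)) ≤ 1 := by
      apply Real.exp_le_one_iff.2
      apply div_nonpos_of_nonpos_of_nonneg (neg_nonpos.2 (sq_nonneg x)) (by positivity)
    have h2 : (0:ℝ) < s ^ (-(ν + 1)) := Real.rpow_pos_of_pos hs0 _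
    rw [Real.norm_eq_abs, abs_mul, abs_of_pos h2, abs_of_pos (Real.exp_pos _)]
    nlinarith [Real.exp_pos (-x ^ 2 / (2 * s))]

lemma aux_key (ν x : ℝ) (hν : 0 < ν) :
    Tendsto (fun t : ℝ => t ^ ν * ∫ s in Set.Ioi t, s ^ (-(ν + 1)) * Real.exp (-x ^ 2 / (2 * s)))
      atTop (nhds (1 / ν)) := by
  have hIoi : ∀ t : ℝ, 0 < t → (∫ s in Set.Ioi t, s ^ (-(ν + 1))) = t ^ (-ν) / ν := by
    intro t ht
    rw [integral_Ioi_rpow_of_lt (by linarith) ht]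
    ring_nf
  apply tendsto_of_tendsto_of_tendsto_of_le_of_le'
      (g := fun t : ℝ => Real.exp (-x ^ 2 / (2 * t)) / ν) (h := fun _ : ℝ => 1 / ν)
  · have h1 : Tendsto (fun t : ℝ => -x ^ 2 / (2 * t)) atTop (nhds 0) := by
      apply Tendsto.div_atTop tendsto_const_nhds
      exact Tendsto.const_mul_atTop two_pos tendsto_id
    have h2 := (Real.continuous_exp.tendsto 0).comp h1
    simpa using h2.div_const ν
  · exact tendsto_const_nhds
  · filter_upwards [eventually_gt_atTop (0:ℝ)] with t ht
    have hmono : Real.exp (-x ^ 2 / (2 * t)) * (t ^ (-ν) / ν) ≤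
        ∫ s in Set.Ioi t, s ^ (-(ν + 1)) * Real.exp (-x ^ 2 / (2 * s)) := by
      rw [← hIoi t ht, ← integral_const_mul]
      apply setIntegral_mono_on
      · exact (integrableOn_Ioi_rpow_of_lt (by linarith) ht).const_mul _
      · exact aux_intOn ν x t hν ht
      · exact measurableSet_Ioi
      · intro s hs
        have hs0 : 0 < s := ht.trans hs
        have hexp : Real.exp (-x ^ 2 / (2 * t)) ≤ Real.exp (-x ^ 2 / (2 * s)) := by
          apply Real.exp_le_exp.2
          rw [div_le_div_iff₀ (by positivity) (by positivity)]
          nlinarith [sq_nonneg x, le_of_lt (Set.mem_Ioi.mp hs)]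
        have h2 : (0:ℝ) ≤ s ^ (-(ν + 1)) := (Real.rpow_pos_of_pos hs0 _).le
        rw [mul_comm (Real.exp _)]
        exact mul_le_mul_of_nonneg_left hexp h2
    calc Real.exp (-x ^ 2 / (2 * t)) / ν
        = t ^ ν * (Real.exp (-x ^ 2 / (2 * t)) * (t ^ (-ν) / ν)) := by
          rw [show t ^ ν * (Real.exp (-x ^ 2 / (2 * t)) * (t ^ (-ν) / ν))
              = (t ^ ν * t ^ (-ν)) * (Real.exp (-x ^ 2 / (2 * t)) / ν) by ring,
            ← Real.rpow_add ht]
          simp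
      _ ≤ _ := by
          apply mul_le_mul_of_nonneg_left hmono (Real.rpow_nonneg ht.le _)
  · filter_upwards [eventually_gt_atTop (0:ℝ)] with t ht
    have hmono : (∫ s in Set.Ioi t, s ^ (-(ν + 1)) * Real.exp (-x ^ 2 / (2 * s))) ≤
        t ^ (-ν) / ν := by
      rw [← hIoi t ht]
      apply setIntegral_mono_on (aux_intOn ν x t hν ht)
          (integrableOn_Ioi_rpow_of_lt (by linarith) ht) measurableSet_Ioi
      intro s hs
      have hs0 : 0 < s := ht.trans hs
      have hexp : Real.exp (-x ^ 2 / (2 * s)) ≤ 1 :=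
        Real.exp_le_one_iff.2 (div_nonpos_of_nonpos_of_nonneg (neg_nonpos.2 (sq_nonneg x)) (by positivity))
      have h2 : (0:ℝ) ≤ s ^ (-(ν + 1)) := (Real.rpow_pos_of_pos hs0 _).le
      nlinarith
    calc t ^ ν * ∫ s in Set.Ioi t, s ^ (-(ν + 1)) * Real.exp (-x ^ 2 / (2 * s))
        ≤ t ^ ν * (t ^ (-ν) / ν) :=
          mul_le_mul_of_nonneg_left hmono (Real.rpow_nonneg ht.le _)
      _ = 1 / ν := by
          rw [show t ^ ν * (t ^ (-ν) / ν) = (t ^ ν * t ^ (-ν)) / ν by ring,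
            ← Real.rpow_add ht]
          simp

lemma aux_F (ν x : ℝ) (hν : 0 < ν) :
    Tendsto (fun t : ℝ => t ^ ν * F ν x t) atTop
      (nhds (x ^ (2 * ν) / (2 ^ ν * Real.Gamma (ν + 1)))) := by
  have h := (aux_key ν x hν).const_mul (x ^ (2 * ν) / (2 ^ ν * Real.Gamma ν))
  have hΓ : Real.Gamma (ν + 1) = ν * Real.Gamma ν := Real.Gamma_add_one hν.ne'
  have hΓ0 : Real.Gamma ν ≠ 0 := (Real.Gamma_pos_of_pos hν).ne'
  have h2 : (2:ℝ) ^ ν ≠ 0 := by positivity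
  have heq : x ^ (2 * ν) / (2 ^ ν * Real.Gamma (ν + 1))
      = x ^ (2 * ν) / (2 ^ ν * Real.Gamma ν) * (1 / ν) := by
    rw [hΓ, mul_one_div, div_div]; ring_nf
  rw [heq]
  exact h.congr fun t => by unfold F; ring

lemma aux_F0 (ν x : ℝ) (hν : 0 < ν) :
    Tendsto (fun t : ℝ => F ν x t) atTop (nhds 0) := by
  have h := (aux_F ν x hν).mul (tendsto_rpow_neg_atTop hν)
  rw [mul_zero] at h
  apply h.congr'
  filter_upwards [eventually_gt_atTop (0:ℝ)] with t ht
  rw [show t ^ ν * F ν x t * t ^ (-ν) = (t ^ ν * t ^ (-ν)) * F ν x t by ring,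
    ← Real.rpow_add ht]
  simp

theorem stmt_12 (ν a b : ℝ) (hν : 0 < ν) (hb : 0 ≤ b) (hba : b < a) :
    Tendsto (fun t : ℝ => t ^ (2 * ν) * (F ν b t * (F ν a t - F ν b t) / (1 - F ν b t)))
      atTop
      (nhds ((b ^ (2 * ν) / (2 ^ ν * Real.Gamma (ν + 1))) *
        ((a ^ (2 * ν) - b ^ (2 * ν)) / (2 ^ ν * Real.Gamma (ν + 1))))) := by
  have hFa := aux_F ν a hν
  have hFb := aux_F ν b hν
  have hden : Tendsto (fun t : ℝ => 1 - F ν b t) atTop (nhds 1) := by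
    simpa using (tendsto_const_nhds (x := (1:ℝ)) (f := atTop)).sub (aux_F0 ν b hν)
  have h := ((hFb.mul (hFa.sub hFb)).div hden one_ne_zero)
  have heq : (b ^ (2 * ν) / (2 ^ ν * Real.Gamma (ν + 1))) *
        ((a ^ (2 * ν) - b ^ (2 * ν)) / (2 ^ ν * Real.Gamma (ν + 1)))
      = b ^ (2 * ν) / (2 ^ ν * Real.Gamma (ν + 1)) *
          (a ^ (2 * ν) / (2 ^ ν * Real.Gamma (ν + 1)) -
            b ^ (2 * ν) / (2 ^ ν * Real.Gamma (ν + 1))) / 1 := by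
    rw [div_one, sub_div]
  rw [heq]
  apply h.congr'
  filter_upwards [eventually_gt_atTop (0:ℝ)] with t ht
  simp only [Pi.div_apply]
  rw [show (2:ℝ) * ν = ν + ν by ring, Real.rpow_add ht]
  ring
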